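/- Let p < q be primes and n = pq. Then the independent domination polynomial of the comaximal graph Γ(ℤ_n) is D_i(Γ(ℤ_n), x) = (pq − p − q + 1)·x + x^p + x^q. -/

import Mathlib

open Polynomial

/-- The comaximal graph of `ℤ/nℤ`: distinct `a, b` are adjacent iff the ideal
generated by `a` and `b` is the whole ring. -/
def comaximalGraph (n : ℕ) : SimpleGraph (ZMod n) where
  Adj a b := a ≠ b ∧ Ideal.span ({a, b} : Set (ZMod n)) = ⊤
  symm := by
    constructor
    rintro a b ⟨hab, h⟩
    refine ⟨hab.symm, ?_⟩
    rwa [Set.pair_comm]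
  loopless := by
    constructor
    rintro a ⟨h, -⟩
    exact h rfl

/-- `S` is an independent dominating set of `G`. -/
def IsIndepDomSet {V : Type*} (G : SimpleGraph V) (S : Finset V) : Prop :=
  (∀ a ∈ S, ∀ b ∈ S, ¬ G.Adj a b) ∧ ∀ v : V, v ∉ S → ∃ u ∈ S, G.Adj u v

/-- The independent domination polynomial `D_i(G, x) = Σ_k d_i(G,k) x^k`. -/
noncomputable def indepDomPoly {V : Type*} (G : SimpleGraph V) : Polynomial ℝ :=
  ∑ k ∈ Finset.range (Nat.card V + 1),
    Polynomial.C ((Nat.card {S : Finset V // IsIndepDomSet G S ∧ S.card = k}) : ℝ) *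
      Polynomial.X ^ k

/-- The independence polynomial `I(G, x) = Σ_k c_k x^k`. -/
noncomputable def indepPoly {V : Type*} (G : SimpleGraph V) : Polynomial ℝ :=
  ∑ k ∈ Finset.range (Nat.card V + 1),
    Polynomial.C ((Nat.card {S : Finset V //
        (∀ a ∈ S, ∀ b ∈ S, ¬ G.Adj a b) ∧ S.card = k}) : ℝ) *
      Polynomial.X ^ k

/- ### Auxiliary lemmas -/

lemma field_isCoprime_iff {K : Type*} [Field K] (x y : K) :
    IsCoprime x y ↔ (x ≠ 0 ∨ y ≠ 0) := by
  constructor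
  · rintro ⟨u, v, h⟩
    by_contra hc
    push_neg at hc
    rw [hc.1, hc.2, mul_zero, mul_zero, add_zero] at h
    exact zero_ne_one h
  · rintro (hx | hy)
    · exact ⟨x⁻¹, 0, by field_simp; ring⟩
    · exact ⟨0, y⁻¹, by field_simp; ring⟩

lemma prod_isCoprime_iff {R S : Type*} [CommSemiring R] [CommSemiring S] (x y : R × S) :
    IsCoprime x y ↔ IsCoprime x.1 y.1 ∧ IsCoprime x.2 y.2 := by
  constructor
  · intro h
    exact ⟨h.map (RingHom.fst R S), h.map (RingHom.snd R S)⟩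
  · rintro ⟨⟨u1, v1, h1⟩, ⟨u2, v2, h2⟩⟩
    refine ⟨(u1, u2), (v1, v2), ?_⟩
    rw [Prod.ext_iff]
    constructor <;> simpa

lemma ringEquiv_isCoprime_iff {R S : Type*} [CommSemiring R] [CommSemiring S] (e : R ≃+* S)
    (x y : R) : IsCoprime (e x) (e y) ↔ IsCoprime x y := by
  constructor
  · intro h
    simpa using h.map e.symm.toRingHom
  · intro h
    exact h.map e.toRingHom

lemma comax_adj {n : ℕ} (a b : ZMod n) :
    (comaximalGraph n).Adj a b ↔ a ≠ b ∧ IsCoprime a b := by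
  show a ≠ b ∧ _ ↔ _
  rw [Ideal.eq_top_iff_one, Ideal.mem_span_pair]
  rfl

/-- For `n = pq` with primes `p < q`,
`D_i(Γ(ℤ_n), x) = (pq − p − q + 1)·x + x^p + x^q`. -/
theorem stmt_3 (p q : ℕ) (hp : p.Prime) (hq : q.Prime) (hpq : p < q) :
    indepDomPoly (comaximalGraph (p * q)) =
      Polynomial.C ((p * q - p - q + 1 : ℕ) : ℝ) * Polynomial.X +
        Polynomial.X ^ p + Polynomial.X ^ q := by
  classical
  have hp2 := hp.two_le
  have hq2 := hq.two_le
  haveI : Fact p.Prime := ⟨hp⟩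
  haveI : Fact q.Prime := ⟨hq⟩
  haveI : NeZero (p * q) := ⟨Nat.mul_ne_zero hp.pos.ne' hq.pos.ne'⟩
  -- the subtraction identity
  have hm : p * q - p - q + 1 = (p - 1) * (q - 1) := by
    obtain ⟨a, rfl⟩ : ∃ a, p = a + 2 := ⟨p - 2, by omega⟩
    obtain ⟨b, rfl⟩ : ∃ b, q = b + 2 := ⟨q - 2, by omega⟩
    have h1 : a + 2 - 1 = a + 1 := by omega
    have h2 : b + 2 - 1 = b + 1 := by omega
    rw [h1, h2]
    have h3 : (a + 2) * (b + 2) = a * b + 2 * a + 2 * b + 4 := by ring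
    have h4 : (a + 1) * (b + 1) = a * b + a + b + 1 := by ring
    omega
  obtain ⟨e⟩ : Nonempty (ZMod (p * q) ≃+* ZMod p × ZMod q) :=
    ⟨ZMod.chineseRemainder ((Nat.coprime_primes hp hq).mpr hpq.ne)⟩
  -- adjacency in coordinates
  have adj_iff : ∀ a b : ZMod (p * q), (comaximalGraph (p * q)).Adj a b ↔
      a ≠ b ∧ ((e a).1 ≠ 0 ∨ (e b).1 ≠ 0) ∧ ((e a).2 ≠ 0 ∨ (e b).2 ≠ 0) := by
    intro a b
    rw [comax_adj, ← ringEquiv_isCoprime_iff e, prod_isCoprime_iff,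
      field_isCoprime_iff, field_isCoprime_iff]
  have hez : ∀ a : ZMod (p * q), a = 0 ↔ (e a).1 = 0 ∧ (e a).2 = 0 := by
    intro a
    constructor
    · rintro rfl; simp
    · intro h
      apply e.injective
      rw [map_zero, Prod.ext_iff]
      simp [h.1, h.2]
  have hq1 : (1 : ZMod q) ≠ 0 := one_ne_zero
  have hp1 : (1 : ZMod p) ≠ 0 := one_ne_zero
  set a₀ : ZMod (p * q) := e.symm (0, 1) with ha₀
  set b₀ : ZMod (p * q) := e.symm (1, 0) with hb₀
  have hea : e a₀ = (0, 1) := e.apply_symm_apply _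
  have heb : e b₀ = (1, 0) := e.apply_symm_apply _
  set FA : Finset (ZMod (p * q)) :=
    Finset.univ.filter (fun x => (e x).1 = 0) with hFA
  set FB : Finset (ZMod (p * q)) :=
    Finset.univ.filter (fun x => (e x).2 = 0) with hFB
  have memFA : ∀ x, x ∈ FA ↔ (e x).1 = 0 := by
    intro x; rw [hFA]; simp
  have memFB : ∀ x, x ∈ FB ↔ (e x).2 = 0 := by
    intro x; rw [hFB]; simp
  -- cardinalities
  have cardFA : FA.card = q := by
    rw [hFA, ← Fintype.card_subtype]
    have eqv : {x : ZMod (p * q) // (e x).1 = 0} ≃ ZMod q :=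
      { toFun := fun x => (e x.1).2
        invFun := fun z => ⟨e.symm (0, z), by simp⟩
        left_inv := by
          rintro ⟨x, hx⟩
          have h : ((0 : ZMod p), (e x).2) = e x := by
            rw [Prod.ext_iff]; exact ⟨hx.symm, rfl⟩
          simp [h]
        right_inv := fun z => by simp }
    rw [Fintype.card_congr eqv, ZMod.card]
  have cardFB : FB.card = p := by
    rw [hFB, ← Fintype.card_subtype]
    have eqv : {x : ZMod (p * q) // (e x).2 = 0} ≃ ZMod p :=
      { toFun := fun x => (e x.1).1
        invFun := fun z => ⟨e.symm (z, 0), by simp⟩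
        left_inv := by
          rintro ⟨x, hx⟩
          have h : ((e x).1, (0 : ZMod q)) = e x := by
            rw [Prod.ext_iff]; exact ⟨rfl, hx.symm⟩
          simp [h]
        right_inv := fun z => by simp }
    rw [Fintype.card_congr eqv, ZMod.card]
  set U : Finset (ZMod (p * q)) :=
    Finset.univ.filter (fun u => (e u).1 ≠ 0 ∧ (e u).2 ≠ 0) with hUdef
  have cardnzp : Fintype.card {a : ZMod p // a ≠ 0} = p - 1 := by
    have := Fintype.card_subtype_compl (fun a : ZMod p => a = 0)
    simp only [Fintype.card_subtype_eq, ZMod.card] at this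
    convert this using 2
  have cardnzq : Fintype.card {a : ZMod q // a ≠ 0} = q - 1 := by
    have := Fintype.card_subtype_compl (fun a : ZMod q => a = 0)
    simp only [Fintype.card_subtype_eq, ZMod.card] at this
    convert this using 2
  have cardU : U.card = (p - 1) * (q - 1) := by
    rw [hUdef, ← Fintype.card_subtype]
    have eqv : {x : ZMod (p * q) // (e x).1 ≠ 0 ∧ (e x).2 ≠ 0} ≃
        {a : ZMod p // a ≠ 0} × {b : ZMod q // b ≠ 0} :=
      (e.toEquiv.subtypeEquiv (p := fun x => (e x).1 ≠ 0 ∧ (e x).2 ≠ 0)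
        (q := fun y : ZMod p × ZMod q => y.1 ≠ 0 ∧ y.2 ≠ 0)
        (fun a => Iff.rfl)).trans
        (Equiv.subtypeProdEquivProd (p := fun a : ZMod p => a ≠ 0)
          (q := fun b : ZMod q => b ≠ 0))
    rw [Fintype.card_congr eqv, Fintype.card_prod, cardnzp, cardnzq]
  -- classification of independent dominating sets
  have classify : ∀ S : Finset (ZMod (p * q)),
      IsIndepDomSet (comaximalGraph (p * q)) S ↔
        (∃ u, ((e u).1 ≠ 0 ∧ (e u).2 ≠ 0) ∧ S = {u}) ∨ S = FA ∨ S = FB := by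
    intro S
    constructor
    · rintro ⟨hind, hdom⟩
      by_cases hU : ∃ u ∈ S, (e u).1 ≠ 0 ∧ (e u).2 ≠ 0
      · obtain ⟨u, huS, hu1, hu2⟩ := hU
        left
        refine ⟨u, ⟨hu1, hu2⟩, Finset.eq_singleton_iff_unique_mem.mpr ⟨huS, ?_⟩⟩
        intro b hbS
        by_contra hb
        exact hind u huS b hbS ((adj_iff u b).mpr ⟨fun h => hb h.symm, Or.inl hu1, Or.inl hu2⟩)
      · have hU' : ∀ u ∈ S, (e u).1 = 0 ∨ (e u).2 = 0 := by
          intro u hu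
          by_contra h
          push_neg at h
          exact hU ⟨u, hu, h.1, h.2⟩
        by_cases hA : ∃ a ∈ S, (e a).1 = 0 ∧ (e a).2 ≠ 0
        · right; left
          obtain ⟨a, haS, ha1, ha2⟩ := hA
          have hnoB : ∀ b ∈ S, ¬((e b).1 ≠ 0 ∧ (e b).2 = 0) := by
            rintro b hbS ⟨hb1, hb2⟩
            apply hind a haS b hbS
            rw [adj_iff]
            exact ⟨fun h => hb1 (h ▸ ha1), Or.inr hb1, Or.inl ha2⟩
          have hfst : ∀ x ∈ S, (e x).1 = 0 := by
            intro x hxS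
            rcases hU' x hxS with h | h
            · exact h
            · by_contra h1
              exact hnoB x hxS ⟨h1, h⟩
          have hall : ∀ x : ZMod (p * q), (e x).1 = 0 → x ∈ S := by
            intro x hx
            by_contra hxS
            obtain ⟨u, huS, hadj⟩ := hdom x hxS
            rw [adj_iff] at hadj
            rcases hadj.2.1 with h | h
            · exact h (hfst u huS)
            · exact h hx
          ext x
          rw [memFA]
          exact ⟨hfst x, hall x⟩
        · by_cases hB : ∃ b ∈ S, (e b).1 ≠ 0 ∧ (e b).2 = 0
          · right; right
            obtain ⟨b, hbS, hb1, hb2⟩ := hB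
            have hnoA : ∀ a ∈ S, ¬((e a).1 = 0 ∧ (e a).2 ≠ 0) :=
              fun a haS ha => hA ⟨a, haS, ha⟩
            have hsnd : ∀ x ∈ S, (e x).2 = 0 := by
              intro x hxS
              rcases hU' x hxS with h | h
              · by_cases h2 : (e x).2 = 0
                · exact h2
                · exact absurd ⟨h, h2⟩ (hnoA x hxS)
              · exact h
            have hall : ∀ x : ZMod (p * q), (e x).2 = 0 → x ∈ S := by
              intro x hx
              by_contra hxS
              obtain ⟨u, huS, hadj⟩ := hdom x hxS
              rw [adj_iff] at hadj
              rcases hadj.2.2 with h | h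
              · exact h (hsnd u huS)
              · exact h hx
            ext x
            rw [memFB]
            exact ⟨hsnd x, hall x⟩
          · exfalso
            have hS0 : ∀ x ∈ S, x = 0 := by
              intro x hxS
              rcases hU' x hxS with h | h
              · by_cases h2 : (e x).2 = 0
                · exact (hez x).mpr ⟨h, h2⟩
                · exact absurd ⟨x, hxS, h, h2⟩ hA
              · by_cases h1 : (e x).1 = 0
                · exact (hez x).mpr ⟨h1, h⟩
                · exact absurd ⟨x, hxS, h1, h⟩ hB
            have ha₀S : a₀ ∉ S := by
              intro h
              have h0 : a₀ = (0 : ZMod (p * q)) := hS0 a₀ h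
              rw [h0, map_zero] at hea
              have : ((0, 1) : ZMod p × ZMod q).2 = (0 : ZMod p × ZMod q).2 := by rw [hea]
              simp at this
            obtain ⟨u, huS, hadj⟩ := hdom a₀ ha₀S
            have hu0 := hS0 u huS
            rw [adj_iff, hu0] at hadj
            rcases hadj.2.1 with h | h
            · simp at h
            · rw [hea] at h
              exact h rfl
    · rintro (⟨u, ⟨hu1, hu2⟩, rfl⟩ | rfl | rfl)
      · constructor
        · intro a ha b hb
          rw [Finset.mem_singleton] at ha hb
          subst ha; subst hb
          exact (comaximalGraph (p * q)).irrefl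
        · intro v hv
          rw [Finset.mem_singleton] at hv
          exact ⟨u, Finset.mem_singleton_self u,
            (adj_iff u v).mpr ⟨fun h => hv h.symm, Or.inl hu1, Or.inl hu2⟩⟩
      · constructor
        · intro a ha b hb hadj
          rw [memFA] at ha hb
          rcases ((adj_iff a b).mp hadj).2.1 with h | h
          · exact h ha
          · exact h hb
        · intro v hv
          rw [memFA] at hv
          by_cases h2 : (e v).2 = 0
          · refine ⟨a₀, ?_, ?_⟩
            · rw [memFA, hea]
            · rw [adj_iff]
              refine ⟨?_, Or.inr hv, Or.inl ?_⟩
              · intro h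
                rw [← h, hea] at h2
                exact hq1 h2
              · rw [hea]
                exact hq1
          · refine ⟨0, ?_, ?_⟩
            · rw [memFA]; simp
            · rw [adj_iff]
              refine ⟨?_, ?_, ?_⟩
              · intro h
                apply hv
                rw [← h]; simp
              · right; exact hv
              · right; exact h2
      · constructor
        · intro a ha b hb hadj
          rw [memFB] at ha hb
          rcases ((adj_iff a b).mp hadj).2.2 with h | h
          · exact h ha
          · exact h hb
        · intro v hv
          rw [memFB] at hv
          by_cases h1 : (e v).1 = 0
          · refine ⟨b₀, ?_, ?_⟩
            · rw [memFB, heb]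
            · rw [adj_iff]
              refine ⟨?_, Or.inl ?_, Or.inr hv⟩
              · intro h
                rw [← h, heb] at h1
                exact hp1 h1
              · rw [heb]
                exact hp1
          · refine ⟨0, ?_, ?_⟩
            · rw [memFB]; simp
            · rw [adj_iff]
              refine ⟨?_, ?_, ?_⟩
              · intro h
                apply hv
                rw [← h]; simp
              · right; exact h1
              · right; exact hv
  -- the collection of independent dominating sets
  set D : Finset (Finset (ZMod (p * q))) := U.image (fun u => {u}) ∪ {FA, FB} with hD
  have memD : ∀ S, IsIndepDomSet (comaximalGraph (p * q)) S ↔ S ∈ D := by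
    intro S
    rw [classify S, hD]
    simp only [Finset.mem_union, Finset.mem_image, hUdef, Finset.mem_filter,
      Finset.mem_univ, true_and, Finset.mem_insert, Finset.mem_singleton]
    constructor
    · rintro (⟨u, hu, rfl⟩ | h | h)
      · exact Or.inl ⟨u, hu, rfl⟩
      · exact Or.inr (Or.inl h)
      · exact Or.inr (Or.inr h)
    · rintro (⟨u, hu, rfl⟩ | h | h)
      · exact Or.inl ⟨u, hu, rfl⟩
      · exact Or.inr (Or.inl h)
      · exact Or.inr (Or.inr h)
  have hN : ∀ k, Nat.card {S : Finset (ZMod (p * q)) //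
      IsIndepDomSet (comaximalGraph (p * q)) S ∧ S.card = k}
      = (D.filter fun S => S.card = k).card := by
    intro k
    rw [← Nat.card_eq_finsetCard]
    exact Nat.card_congr (Equiv.subtypeEquivRight fun S => by
      rw [memD S, Finset.mem_filter])
  have hfilter : ∀ k, (D.filter fun S => S.card = k).card
      = (if k = 1 then (p - 1) * (q - 1) else 0) + (if k = p then 1 else 0)
        + (if k = q then 1 else 0) := by
    intro k
    by_cases h1 : k = 1
    · subst h1
      rw [if_pos rfl, if_neg (by omega), if_neg (by omega)]
      have hfe : D.filter (fun S => S.card = 1) = U.image (fun u => {u}) := by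
        ext S
        simp only [hD, Finset.mem_filter, Finset.mem_union, Finset.mem_image,
          Finset.mem_insert, Finset.mem_singleton]
        constructor
        · rintro ⟨(h | rfl | rfl), hcard⟩
          · exact h
          · rw [cardFA] at hcard; omega
          · rw [cardFB] at hcard; omega
        · rintro ⟨u, hu, rfl⟩
          exact ⟨Or.inl ⟨u, hu, rfl⟩, Finset.card_singleton u⟩
      rw [hfe, Finset.card_image_of_injective _ Finset.singleton_injective, cardU]
      omega
    · by_cases hpk : k = p
      · subst hpk
        rw [if_neg h1, if_pos rfl, if_neg (by omega)]
        have hfe : D.filter (fun S => S.card = k) = {FB} := by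
          ext S
          simp only [hD, Finset.mem_filter, Finset.mem_union, Finset.mem_image,
            Finset.mem_insert, Finset.mem_singleton]
          constructor
          · rintro ⟨(⟨u, hu, rfl⟩ | rfl | rfl), hcard⟩
            · rw [Finset.card_singleton] at hcard; omega
            · rw [cardFA] at hcard; omega
            · rfl
          · rintro rfl
            exact ⟨Or.inr (Or.inr rfl), cardFB⟩
        rw [hfe, Finset.card_singleton]
      · by_cases hqk : k = q
        · subst hqk
          rw [if_neg h1, if_neg hpk, if_pos rfl]
          have hfe : D.filter (fun S => S.card = k) = {FA} := by
            ext S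
            simp only [hD, Finset.mem_filter, Finset.mem_union, Finset.mem_image,
              Finset.mem_insert, Finset.mem_singleton]
            constructor
            · rintro ⟨(⟨u, hu, rfl⟩ | rfl | rfl), hcard⟩
              · rw [Finset.card_singleton] at hcard; omega
              · rfl
              · rw [cardFB] at hcard; omega
            · rintro rfl
              exact ⟨Or.inr (Or.inl rfl), cardFA⟩
          rw [hfe, Finset.card_singleton]
        · rw [if_neg h1, if_neg hpk, if_neg hqk]
          have hfe : D.filter (fun S => S.card = k) = ∅ := by
            apply Finset.eq_empty_iff_forall_notMem.mpr
            rintro S hS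
            rw [Finset.mem_filter] at hS
            obtain ⟨hSD, hcard⟩ := hS
            rw [hD] at hSD
            simp only [Finset.mem_union, Finset.mem_image, Finset.mem_insert,
              Finset.mem_singleton] at hSD
            rcases hSD with ⟨u, hu, rfl⟩ | rfl | rfl
            · rw [Finset.card_singleton] at hcard; exact h1 hcard.symm
            · rw [cardFA] at hcard; exact hqk hcard.symm
            · rw [cardFB] at hcard; exact hpk hcard.symm
          rw [hfe, Finset.card_empty]
  -- range membership
  have hple : p ≤ p * q := Nat.le_mul_of_pos_right p hq.pos
  have hqle : q ≤ p * q := Nat.le_mul_of_pos_left q hp.pos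
  have h1mem : 1 ∈ Finset.range (p * q + 1) :=
    Finset.mem_range.mpr (Nat.lt_succ_of_le (by omega))
  have hpmem : p ∈ Finset.range (p * q + 1) :=
    Finset.mem_range.mpr (Nat.lt_succ_of_le hple)
  have hqmem : q ∈ Finset.range (p * q + 1) :=
    Finset.mem_range.mpr (Nat.lt_succ_of_le hqle)
  -- assemble the polynomial
  have hsum : ∀ k ∈ Finset.range (p * q + 1),
      Polynomial.C ((Nat.card {S : Finset (ZMod (p * q)) //
          IsIndepDomSet (comaximalGraph (p * q)) S ∧ S.card = k} : ℕ) : ℝ) *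
        Polynomial.X ^ k
      = (if k = 1 then Polynomial.C ((p * q - p - q + 1 : ℕ) : ℝ) * Polynomial.X ^ k else 0)
        + (if k = p then Polynomial.X ^ k else 0)
        + (if k = q then Polynomial.X ^ k else 0) := by
    intro k _
    rw [hN k, hfilter k]
    by_cases h1 : k = 1
    · subst h1
      rw [if_pos rfl, if_neg (by omega), if_neg (by omega), if_pos rfl,
        if_neg (by omega), if_neg (by omega), hm]
      simp
    · by_cases hpk : k = p
      · subst hpk
        rw [if_neg h1, if_pos rfl, if_neg (by omega), if_neg h1, if_pos rfl,
          if_neg (by omega)]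
        simp
      · by_cases hqk : k = q
        · subst hqk
          rw [if_neg h1, if_neg hpk, if_pos rfl, if_neg h1, if_neg hpk, if_pos rfl]
          simp
        · rw [if_neg h1, if_neg hpk, if_neg hqk, if_neg h1, if_neg hpk, if_neg hqk]
          simp
  unfold indepDomPoly
  rw [Nat.card_zmod]
  rw [Finset.sum_congr rfl hsum, Finset.sum_add_distrib, Finset.sum_add_distrib,
    Finset.sum_ite_eq' _ 1 _, Finset.sum_ite_eq' _ p _, Finset.sum_ite_eq' _ q _,
    if_pos h1mem, if_pos hpmem, if_pos hqmem, pow_one]
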